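/- arXiv:1805.08811 — 2 statements merged into one kernel-verified Lean document; each statement's English description precedes it below -/
import Mathlib

section
/- Let D_k(t) = det(g^{(i+j−2)}(t))_{1≤i,j≤k} where g(t) = ∫₀¹ e^{−tx} dx. Then D_k'(0)/D_k(0) = −k/2. -/
open MeasureTheory intervalIntegral
set_option maxHeartbeats 1000000

noncomputable def gFun : ℝ → ℝ := fun t => ∫ x in (0:ℝ)..1, Real.exp (-(t * x))

noncomputable def Dk (k : ℕ) : ℝ → ℝ := fun t =>
  Matrix.det (Matrix.of fun i j : Fin k => iteratedDeriv ((i : ℕ) + (j : ℕ)) gFun t)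

noncomputable def Ifun (n : ℕ) : ℝ → ℝ :=
  fun t => ∫ x in (0:ℝ)..1, (-x) ^ n * Real.exp (-(t * x))

lemma cont_integrand (n : ℕ) (t : ℝ) :
    Continuous (fun x : ℝ => (-x) ^ n * Real.exp (-(t * x))) := by
  fun_prop

lemma integrable_integrand (n : ℕ) (t : ℝ) :
    IntervalIntegrable (fun x : ℝ => (-x) ^ n * Real.exp (-(t * x))) volume 0 1 :=
  (cont_integrand n t).intervalIntegrable _ _

lemma Ifun_hasDerivAt (n : ℕ) (t₀ : ℝ) : HasDerivAt (Ifun n) (Ifun (n + 1) t₀) t₀ := by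
  have h := intervalIntegral.hasDerivAt_integral_of_dominated_loc_of_deriv_le
    (μ := volume) (a := (0:ℝ)) (b := 1) (x₀ := t₀)
    (F := fun t x => (-x) ^ n * Real.exp (-(t * x)))
    (F' := fun t x => (-x) ^ (n + 1) * Real.exp (-(t * x)))
    (bound := fun _ => Real.exp (|t₀| + 1))
    (Metric.ball_mem_nhds t₀ one_pos)
    (Filter.Eventually.of_forall fun t => (cont_integrand n t).aestronglyMeasurable)
    (integrable_integrand n t₀)
    (cont_integrand (n + 1) t₀).aestronglyMeasurable
    ?_ ?_ ?_
  · exact h.2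
  · refine Filter.Eventually.of_forall fun x hx t ht => ?_
    rw [Set.uIoc_of_le (by norm_num : (0:ℝ) ≤ 1)] at hx
    have hx0 : 0 < x := hx.1
    have hx1 : x ≤ 1 := hx.2
    have habs : |(-x) ^ (n + 1)| ≤ 1 := by
      rw [abs_pow, abs_neg, abs_of_pos hx0]
      exact pow_le_one₀ hx0.le hx1
    have ht' : |t| ≤ |t₀| + 1 := by
      have h1 := abs_sub_abs_le_abs_sub t t₀
      have h2 : dist t t₀ < 1 := Metric.mem_ball.mp ht
      rw [Real.dist_eq] at h2
      linarith
    have hexp : Real.exp (-(t * x)) ≤ Real.exp (|t₀| + 1) := by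
      apply Real.exp_le_exp.mpr
      have h3 : |(-(t * x))| ≤ |t| := by
        rw [abs_neg, abs_mul, abs_of_pos hx0]
        nlinarith [abs_nonneg t]
      have h4 := abs_le.mp h3
      linarith [neg_abs_le t, h4.2, abs_le.mp (le_refl |t|)]
    rw [norm_mul, Real.norm_eq_abs, Real.norm_eq_abs, Real.abs_exp]
    calc |(-x) ^ (n+1)| * Real.exp (-(t * x)) ≤ 1 * Real.exp (|t₀| + 1) := by
          apply mul_le_mul habs hexp (Real.exp_pos _).le one_pos.le
      _ = Real.exp (|t₀| + 1) := one_mul _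
  · exact intervalIntegrable_const
  · refine Filter.Eventually.of_forall fun x _ t _ => ?_
    have h1 : HasDerivAt (fun t : ℝ => -(t * x)) (-x) t := by
      simpa [Pi.neg_def] using ((hasDerivAt_id t).mul_const x).neg
    have h2 := (h1.exp).const_mul ((-x) ^ n)
    convert h2 using 1
    · rfl
    ring

lemma iteratedDeriv_gFun (n : ℕ) : iteratedDeriv n gFun = Ifun n := by
  induction n with
  | zero =>
    simp only [iteratedDeriv_zero]
    funext t
    simp [gFun, Ifun]
  | succ n ih =>
    rw [iteratedDeriv_succ, ih]
    funext t
    exact (Ifun_hasDerivAt n t).deriv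

noncomputable def Jfun (n : ℕ) : ℝ → ℝ :=
  fun t => ∫ x in (0:ℝ)..1, (1 - x) ^ n * Real.exp (-(t * x))

lemma Ifun_neg (n : ℕ) (t : ℝ) :
    Ifun n (-t) = (-1) ^ n * Real.exp t * Jfun n t := by
  have e1 : Ifun n (-t) = ∫ x in (0:ℝ)..1, (fun y : ℝ => (-y) ^ n * Real.exp (t * y)) x := by
    rw [Ifun]
    congr 1
    ext x
    rw [neg_mul, neg_neg]
  have e2 := intervalIntegral.integral_comp_sub_left
    (fun y : ℝ => (-y) ^ n * Real.exp (t * y)) 1 (a := (0:ℝ)) (b := 1)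
  simp only [sub_zero, sub_self] at e2
  rw [e1, ← e2, Jfun, ← intervalIntegral.integral_const_mul]
  congr 1
  ext x
  rw [neg_pow (1 - x) n, show t * (1 - x) = t + -(t * x) by ring, Real.exp_add]
  ring

lemma one_sub_pow (m k : ℕ) (h : m < k) (x : ℝ) :
    (1 - x) ^ m = ∑ a : Fin k, (m.choose (a : ℕ) : ℝ) * (-x) ^ (a : ℕ) := by
  have h1 : (1 - x) ^ m = ∑ a ∈ Finset.range (m + 1), (m.choose a : ℝ) * (-x) ^ a := by
    rw [show (1 : ℝ) - x = -x + 1 by ring, add_pow]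
    refine Finset.sum_congr rfl fun a _ => ?_
    rw [one_pow]
    ring
  have h2 : ∑ a ∈ Finset.range (m + 1), (m.choose a : ℝ) * (-x) ^ a
      = ∑ a ∈ Finset.range k, (m.choose a : ℝ) * (-x) ^ a := by
    refine Finset.sum_subset (Finset.range_subset_range.mpr h) fun a _ ha => ?_
    rw [Finset.mem_range, not_lt] at ha
    simp [Nat.choose_eq_zero_of_lt (by omega : m < a)]
  rw [h1, h2, ← Fin.sum_univ_eq_sum_range]

lemma intervalIntegrable_sum' {ι : Type*} (s : Finset ι) (f : ι → ℝ → ℝ)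
    (h : ∀ i ∈ s, IntervalIntegrable (f i) volume 0 1) :
    IntervalIntegrable (fun x => ∑ i ∈ s, f i x) volume 0 1 := by
  have h2 := IntervalIntegrable.sum s h
  have h3 : (∑ i ∈ s, f i) = fun x => ∑ i ∈ s, f i x := by
    funext x
    simp [Finset.sum_apply]
  rwa [h3] at h2

lemma Jfun_eq {k : ℕ} (i j : Fin k) (t : ℝ) :
    Jfun ((i : ℕ) + (j : ℕ)) t =
      ∑ a : Fin k, ∑ b : Fin k,
        ((i : ℕ).choose (a : ℕ) : ℝ) * ((j : ℕ).choose (b : ℕ) : ℝ) *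
          Ifun ((a : ℕ) + (b : ℕ)) t := by
  have key : Set.EqOn
      (fun x : ℝ => (1 - x) ^ ((i : ℕ) + (j : ℕ)) * Real.exp (-(t * x)))
      (fun x : ℝ => ∑ a : Fin k, ∑ b : Fin k,
        ((i : ℕ).choose (a : ℕ) : ℝ) * ((j : ℕ).choose (b : ℕ) : ℝ) *
          ((-x) ^ ((a : ℕ) + (b : ℕ)) * Real.exp (-(t * x))))
      (Set.uIcc (0:ℝ) 1) := by
    intro x _
    simp only
    rw [pow_add, one_sub_pow (i : ℕ) k i.isLt x, one_sub_pow (j : ℕ) k j.isLt x,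
      Finset.sum_mul_sum, Finset.sum_mul]
    refine Finset.sum_congr rfl fun a _ => ?_
    rw [Finset.sum_mul]
    refine Finset.sum_congr rfl fun b _ => ?_
    rw [pow_add]
    ring
  rw [Jfun, intervalIntegral.integral_congr key, intervalIntegral.integral_finset_sum
    (fun a _ => intervalIntegrable_sum' Finset.univ _
      (fun b _ => (integrable_integrand _ t).const_mul _))]
  refine Finset.sum_congr rfl fun a _ => ?_
  rw [intervalIntegral.integral_finset_sum
    (fun b _ => (integrable_integrand _ t).const_mul _)]
  refine Finset.sum_congr rfl fun b _ => ?_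
  rw [intervalIntegral.integral_const_mul]
  rfl

noncomputable def Amat (k : ℕ) (t : ℝ) : Matrix (Fin k) (Fin k) ℝ :=
  Matrix.of fun i j : Fin k => Ifun ((i : ℕ) + (j : ℕ)) t

noncomputable def Emat (k : ℕ) : Matrix (Fin k) (Fin k) ℝ :=
  Matrix.of fun i a : Fin k => (-1 : ℝ) ^ (i : ℕ) * ((i : ℕ).choose (a : ℕ) : ℝ)

lemma Dk_eq (k : ℕ) (t : ℝ) : Dk k t = (Amat k t).det := by
  unfold Dk Amat
  simp only [iteratedDeriv_gFun]

lemma Emat_det_sq (k : ℕ) : (Emat k).det * (Emat k).det = 1 := by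
  have h : (Emat k).BlockTriangular OrderDual.toDual := by
    intro i j hij
    have hlt : (i : ℕ) < (j : ℕ) := hij
    simp [Emat, Nat.choose_eq_zero_of_lt hlt]
  rw [Matrix.det_of_lowerTriangular _ h, ← Finset.prod_mul_distrib]
  apply Finset.prod_eq_one
  intro i _
  have hE : Emat k i i = (-1 : ℝ) ^ (i : ℕ) := by simp [Emat]
  rw [hE, ← pow_add]
  exact Even.neg_one_pow ⟨(i : ℕ), rfl⟩

lemma Amat_neg (k : ℕ) (t : ℝ) :
    Amat k (-t) = Emat k * (Real.exp t • Amat k t) * (Emat k).transpose := by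
  ext i j
  have lhs : Amat k (-t) i j = (-1 : ℝ) ^ ((i : ℕ) + (j : ℕ)) * Real.exp t *
      ∑ a : Fin k, ∑ b : Fin k,
        ((i : ℕ).choose (a : ℕ) : ℝ) * ((j : ℕ).choose (b : ℕ) : ℝ) *
          Ifun ((a : ℕ) + (b : ℕ)) t := by
    show Ifun ((i : ℕ) + (j : ℕ)) (-t) = _
    rw [Ifun_neg, Jfun_eq i j t]
  rw [lhs]
  simp only [Matrix.mul_apply, Matrix.transpose_apply, Matrix.smul_apply, smul_eq_mul,
    Finset.sum_mul, Finset.mul_sum]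
  rw [Finset.sum_comm]
  refine Finset.sum_congr rfl fun a _ => Finset.sum_congr rfl fun b _ => ?_
  simp only [Emat, Amat, Matrix.of_apply]
  rw [pow_add ((-1 : ℝ)) (i : ℕ) (j : ℕ)]
  ring

lemma Amat_det_neg (k : ℕ) (t : ℝ) :
    (Amat k (-t)).det = Real.exp (k * t) * (Amat k t).det := by
  rw [Amat_neg, Matrix.det_mul, Matrix.det_mul, Matrix.det_transpose, Matrix.det_smul]
  have hcard : Real.exp t ^ Fintype.card (Fin k) = Real.exp ((k : ℝ) * t) := by
    rw [Fintype.card_fin, ← Real.exp_nat_mul]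
  rw [hcard]
  linear_combination Real.exp ((k : ℝ) * t) * (Amat k t).det * Emat_det_sq k

lemma Ifun_differentiable (n : ℕ) : Differentiable ℝ (Ifun n) :=
  fun t => (Ifun_hasDerivAt n t).differentiableAt

lemma Amat_det_differentiable (k : ℕ) : Differentiable ℝ (fun t => (Amat k t).det) := by
  have h : (fun t => (Amat k t).det) = fun t =>
      ∑ σ : Equiv.Perm (Fin k), ((Equiv.Perm.sign σ : ℤ) : ℝ) * ∏ i, Amat k t (σ i) i := by
    funext t
    rw [Matrix.det_apply']
  rw [h]
  apply Differentiable.fun_sum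
  intro σ _
  apply Differentiable.const_mul
  apply Differentiable.fun_finsetProd
  intro i _
  exact Ifun_differentiable _

lemma gram (k : ℕ) (v : Fin k → ℝ) :
    dotProduct v ((Amat k 0).mulVec v) =
      ∫ x in (0:ℝ)..1, (∑ i : Fin k, v i * (-x) ^ (i : ℕ)) ^ 2 := by
  have key : Set.EqOn
      (fun x : ℝ => (∑ i : Fin k, v i * (-x) ^ (i : ℕ)) ^ 2)
      (fun x : ℝ => ∑ i : Fin k, ∑ j : Fin k,
        v i * v j * ((-x) ^ ((i : ℕ) + (j : ℕ)) * Real.exp (-(0 * x))))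
      (Set.uIcc (0:ℝ) 1) := by
    intro x _
    simp only [zero_mul, neg_zero, Real.exp_zero, mul_one]
    rw [sq, Finset.sum_mul_sum]
    refine Finset.sum_congr rfl fun i _ => Finset.sum_congr rfl fun j _ => ?_
    rw [pow_add]
    ring
  rw [intervalIntegral.integral_congr key, intervalIntegral.integral_finset_sum]
  · simp only [dotProduct, Matrix.mulVec]
    refine Finset.sum_congr rfl fun i _ => ?_
    rw [intervalIntegral.integral_finset_sum]
    · rw [Finset.mul_sum]
      refine Finset.sum_congr rfl fun j _ => ?_
      rw [intervalIntegral.integral_const_mul]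
      show v i * (Amat k 0 i j * v j) = _
      show v i * (Ifun ((i : ℕ) + (j : ℕ)) 0 * v j) = _
      rw [show Ifun ((i : ℕ) + (j : ℕ)) 0
          = ∫ x in (0:ℝ)..1, (-x) ^ ((i : ℕ) + (j : ℕ)) * Real.exp (-(0 * x)) from rfl]
      ring
    · intro j _
      exact (integrable_integrand _ 0).const_mul _
  · intro i _
    exact intervalIntegrable_sum' Finset.univ _
      (fun j _ => (integrable_integrand _ 0).const_mul _)

lemma Amat_zero_posdef (k : ℕ) : (Amat k 0).PosDef := by
  rw [Matrix.posDef_iff_dotProduct_mulVec]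
  constructor
  · show (Amat k 0).conjTranspose = Amat k 0
    ext i j
    simp only [Matrix.conjTranspose_apply, Amat, Matrix.of_apply, star_trivial]
    rw [Nat.add_comm]
  · intro v hv
    rw [star_trivial, gram k v]
    set P : ℝ → ℝ := fun x => ∑ i : Fin k, v i * (-x) ^ (i : ℕ) with hP
    have hPcont : Continuous P := by
      apply continuous_finset_sum
      intro i _
      fun_prop
    obtain ⟨i₀, hi₀⟩ : ∃ i, v i ≠ 0 := Function.ne_iff.mp hv
    set p : Polynomial ℝ :=
      ∑ i : Fin k, Polynomial.C (v i * (-1) ^ (i : ℕ)) * Polynomial.X ^ (i : ℕ) with hp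
    have hp_eval : ∀ x : ℝ, p.eval x = P x := by
      intro x
      rw [hp, Polynomial.eval_finset_sum]
      refine Finset.sum_congr rfl fun i _ => ?_
      rw [Polynomial.eval_mul, Polynomial.eval_C, Polynomial.eval_pow, Polynomial.eval_X,
        neg_pow x (i : ℕ)]
      ring
    have hcoeff : p.coeff (i₀ : ℕ) = v i₀ * (-1) ^ (i₀ : ℕ) := by
      rw [hp, Polynomial.finset_sum_coeff]
      rw [Finset.sum_eq_single i₀]
      · rw [Polynomial.coeff_C_mul, Polynomial.coeff_X_pow, if_pos rfl, mul_one]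
      · intro i _ hne
        have hvne : (i : ℕ) ≠ (i₀ : ℕ) := fun hc => hne (Fin.val_injective hc)
        rw [Polynomial.coeff_C_mul, Polynomial.coeff_X_pow, if_neg (Ne.symm hvne), mul_zero]
      · intro habs
        exact absurd (Finset.mem_univ i₀) habs
    have hpne : p ≠ 0 := by
      intro hzero
      rw [hzero, Polynomial.coeff_zero] at hcoeff
      exact (mul_ne_zero hi₀ (pow_ne_zero _ (by norm_num : (-1:ℝ) ≠ 0))) hcoeff.symm
    have hint : IntervalIntegrable (fun x => (P x) ^ 2) volume 0 1 :=
      ((hPcont.pow 2).intervalIntegrable _ _)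
    rw [intervalIntegral.integral_pos_iff_support_of_nonneg_ae
      (Filter.Eventually.of_forall fun x => sq_nonneg (P x)) hint]
    refine ⟨one_pos, ?_⟩
    have hroots : volume {x : ℝ | p.IsRoot x} = 0 :=
      (Polynomial.finite_setOf_isRoot hpne).measure_zero volume
    have hsub : Set.Ioc (0:ℝ) 1 \ {x : ℝ | p.IsRoot x} ⊆
        Function.support (fun x => (P x) ^ 2) ∩ Set.Ioc 0 1 := by
      rintro x ⟨hx1, hx2⟩
      refine ⟨?_, hx1⟩
      simp only [Function.mem_support]
      intro hc
      apply hx2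
      have hPx : P x = 0 := by
        have := sq_nonneg (P x)
        nlinarith [hc]
      show p.IsRoot x
      rw [Polynomial.IsRoot, hp_eval x, hPx]
    calc (0 : ENNReal) < volume (Set.Ioc (0:ℝ) 1 \ {x : ℝ | p.IsRoot x}) := by
          rw [measure_diff_null hroots, Real.volume_Ioc]
          norm_num
      _ ≤ volume (Function.support (fun x => (P x) ^ 2) ∩ Set.Ioc 0 1) :=
          measure_mono hsub

theorem Dk_logDeriv_at_zero (k : ℕ) (hk : 1 ≤ k) :
    deriv (Dk k) 0 / Dk k 0 = -(k : ℝ) / 2 := by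
  have hDk : Dk k = fun t => (Amat k t).det := funext (Dk_eq k)
  have hdiff : Differentiable ℝ (Dk k) := by rw [hDk]; exact Amat_det_differentiable k
  have h0 : Dk k 0 ≠ 0 := by
    rw [hDk]
    exact ne_of_gt (Matrix.PosDef.det_pos (Amat_zero_posdef k))
  have hfun : (fun t => Dk k (-t)) = fun t => Real.exp (k * t) * Dk k t := by
    funext t
    rw [hDk]
    exact Amat_det_neg k t
  have hL : HasDerivAt (fun t => Dk k (-t)) (-(deriv (Dk k) 0)) 0 := by
    have h1 : HasDerivAt (Dk k) (deriv (Dk k) 0) (-(0:ℝ)) := by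
      rw [neg_zero]; exact (hdiff 0).hasDerivAt
    have := h1.comp 0 (hasDerivAt_neg 0)
    simpa [mul_comm, Function.comp_def] using this
  have hR : HasDerivAt (fun t => Real.exp ((k : ℝ) * t) * Dk k t)
      ((k : ℝ) * Dk k 0 + deriv (Dk k) 0) 0 := by
    have h1 : HasDerivAt (fun t : ℝ => (k : ℝ) * t) (k : ℝ) 0 := by
      simpa using (hasDerivAt_id (0:ℝ)).const_mul (k : ℝ)
    have h2 := h1.exp
    have h3 := h2.mul (hdiff 0).hasDerivAt
    simpa [Pi.mul_def] using h3
  rw [hfun] at hL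
  have heq := hL.unique hR
  field_simp
  linarith [heq]
end

section
/- For g(t) = ∫₀¹ e^{−tx} dx and D_k(t) = det(g^{(i+j−2)}(t))_{1≤i,j≤k}, the Toda-type identity D_{k−1}(t)·D_{k+1}(t)/D_k(t)² = (log D_k(t))'' holds wherever D_k(t) ≠ 0, i.e. D_{k−1}·D_{k+1} = D_k·D_k'' − (D_k')². -/
open MeasureTheory intervalIntegral

open Matrix

section Aux
variable {R : Type*} [CommRing R]


lemma hasDerivAt_G (m : ℕ) (t : ℝ) :
    HasDerivAt (fun s => ∫ x in (0:ℝ)..1, (-x)^m * Real.exp (-(s*x)))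
      (∫ x in (0:ℝ)..1, (-x)^(m+1) * Real.exp (-(t*x))) t := by
  have h := intervalIntegral.hasDerivAt_integral_of_dominated_loc_of_deriv_le
      (μ := volume) (F := fun s x => (-x)^m * Real.exp (-(s*x)))
      (F' := fun s x => (-x)^(m+1) * Real.exp (-(s*x))) (x₀ := t) (s := Metric.ball t 1) (a := 0) (b := 1)
      (bound := fun _ => Real.exp (|t|+1)) (Metric.ball_mem_nhds t one_pos)
      (.of_forall fun s => (Continuous.aestronglyMeasurable (by fun_prop)))
      (Continuous.intervalIntegrable (by fun_prop) _ _)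
      (Continuous.aestronglyMeasurable (by fun_prop))
      ?_ (intervalIntegrable_const) ?_
  · exact h.2
  · refine Filter.Eventually.of_forall fun x hx s hs => ?_
    rw [Set.uIoc_of_le (by norm_num)] at hx
    have hx0 : 0 < x := hx.1
    have hx1 : x ≤ 1 := hx.2
    have hs' : |s| < |t| + 1 := by
      have := abs_sub_abs_le_abs_sub s t
      have hd : |s - t| < 1 := by simpa [Real.dist_eq] using hs
      linarith
    rw [norm_mul, norm_pow, norm_neg, Real.norm_eq_abs, Real.norm_eq_abs,
      Real.abs_exp, abs_of_pos hx0]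
    have h1 : x ^ (m+1) ≤ 1 := pow_le_one₀ hx0.le hx1
    have h2 : Real.exp (-(s*x)) ≤ Real.exp (|t|+1) := by
      apply Real.exp_le_exp.2
      have : -(s*x) ≤ |s*x| := neg_le_abs _
      have : |s*x| = |s| * x := by rw [abs_mul, abs_of_pos hx0]
      nlinarith [abs_nonneg s]
    nlinarith [Real.exp_pos (-(s*x))]
  · refine Filter.Eventually.of_forall fun x hx s _ => ?_
    have h1 : HasDerivAt (fun s : ℝ => -(s*x)) (-x) s := (hasDerivAt_mul_const x).neg
    have := (h1.exp).const_mul ((-x)^m)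
    refine this.congr_deriv ?_
    ring


lemma iteratedDeriv_gFun_s8 (m : ℕ) :
    iteratedDeriv m gFun = fun t => ∫ x in (0:ℝ)..1, (-x)^m * Real.exp (-(t*x)) := by
  induction m with
  | zero => funext t; simp [gFun]
  | succ m ih =>
      rw [iteratedDeriv_succ, ih]
      funext t
      exact (hasDerivAt_G m t).deriv

lemma hG (m : ℕ) (t : ℝ) :
    HasDerivAt (iteratedDeriv m gFun) (iteratedDeriv (m+1) gFun t) t := by
  rw [iteratedDeriv_gFun_s8, iteratedDeriv_gFun_s8]
  exact hasDerivAt_G m t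


lemma hasDerivAt_det {n : ℕ} (f f' : Fin n → Fin n → ℝ → ℝ) (t : ℝ)
    (h : ∀ i j, HasDerivAt (f i j) (f' i j t) t) :
    HasDerivAt (fun s => (Matrix.of fun i j => f i j s).det)
      (∑ c : Fin n,
        ((Matrix.of fun i j => f i j t).updateCol c (fun r => f' r c t)).det) t := by
  have key : HasDerivAt
      (fun s => ∑ σ : Equiv.Perm (Fin n), (Equiv.Perm.sign σ : ℤ) * ∏ i, f (σ i) i s)
      (∑ σ : Equiv.Perm (Fin n), (Equiv.Perm.sign σ : ℤ) *
        ∑ c, (∏ j ∈ Finset.univ.erase c, f (σ j) j t) • f' (σ c) c t) t := by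
    apply HasDerivAt.fun_sum
    intro σ _
    exact (HasDerivAt.fun_finsetProd (fun i _ => h (σ i) i)).const_mul _
  have hfun : (fun s => ∑ σ : Equiv.Perm (Fin n), (Equiv.Perm.sign σ : ℤ) * ∏ i, f (σ i) i s)
      = fun s => (Matrix.of fun i j => f i j s).det := by
    funext s
    rw [Matrix.det_apply']
    rfl
  rw [hfun] at key
  convert key using 1
  simp_rw [Finset.mul_sum]
  rw [Finset.sum_comm]
  refine Finset.sum_congr rfl fun c _ => ?_
  rw [Matrix.det_apply']
  refine Finset.sum_congr rfl fun σ _ => ?_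
  have : ∏ i, ((Matrix.of fun i j => f i j t).updateCol c fun r => f' r c t) (σ i) i
      = f' (σ c) c t * ∏ j ∈ Finset.univ.erase c, f (σ j) j t := by
    rw [← Finset.mul_prod_erase Finset.univ _ (Finset.mem_univ c)]
    congr 1
    · simp [Matrix.updateCol_apply]
    · refine Finset.prod_congr rfl fun j hj => ?_
      rw [Matrix.updateCol_apply, if_neg (Finset.ne_of_mem_erase hj)]
      rfl
  rw [this, smul_eq_mul]
  ring


variable {R : Type*} [CommRing R]

lemma det_updateColumn_updateColumn_one {n : Type*} [DecidableEq n] [Fintype n]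
    {p q : n} (h : p ≠ q) (u v : n → R) :
    det (updateCol (updateCol (1 : Matrix n n R) p u) q v)
      = u p * v q - u q * v p := by
  set M' := updateCol (updateCol (1 : Matrix n n R) p u) q v with hM'
  have hap : ∀ i j, M' i j = if j = q then v i else if j = p then u i else (1 : Matrix n n R) i j := by
    intro i j
    simp [hM', Matrix.updateCol_apply]
  have hswap : Equiv.swap p q ≠ 1 := by
    intro hc
    have := congrFun (congrArg (fun e => e.toFun) hc) p
    simp [Equiv.swap_apply_left] at this
    exact h this.symm
  rw [Matrix.det_apply']
  rw [← Finset.sum_subset (Finset.subset_univ ({1, Equiv.swap p q} : Finset (Equiv.Perm n)))]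
  · rw [Finset.sum_pair (Ne.symm hswap)]
    have t1 : (Equiv.Perm.sign (1 : Equiv.Perm n) : R) * ∏ i, M' ((1 : Equiv.Perm n) i) i = u p * v q := by
      have e1 : ∏ i, M' ((1 : Equiv.Perm n) i) i = ∏ i ∈ ({p, q} : Finset n), M' i i :=
        (Finset.prod_subset (Finset.subset_univ _) (by
          intro i _ hi
          simp only [Finset.mem_insert, Finset.mem_singleton, not_or] at hi
          rw [Equiv.Perm.one_apply, hap, if_neg hi.2, if_neg hi.1]
          simp)).symm.trans (Finset.prod_congr rfl (fun i _ => by rw [Equiv.Perm.one_apply]))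
      rw [e1, Finset.prod_pair h, hap, hap, if_neg h, if_pos rfl, if_pos rfl]
      simp
    have t2 : (Equiv.Perm.sign (Equiv.swap p q) : R) * ∏ i, M' (Equiv.swap p q i) i
        = -(u q * v p) := by
      have e2 : ∏ i, M' (Equiv.swap p q i) i = ∏ i ∈ ({p, q} : Finset n), M' (Equiv.swap p q i) i :=
        (Finset.prod_subset (Finset.subset_univ _) (by
          intro i _ hi
          simp only [Finset.mem_insert, Finset.mem_singleton, not_or] at hi
          rw [Equiv.swap_apply_of_ne_of_ne hi.1 hi.2, hap, if_neg hi.2, if_neg hi.1]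
          simp)).symm
      rw [e2, Finset.prod_pair h, Equiv.swap_apply_left, Equiv.swap_apply_right,
        hap, hap, if_neg h, if_pos rfl, if_pos rfl, Equiv.Perm.sign_swap h]
      push_cast
      ring
    rw [t1, t2]
    ring
  · intro σ _ hσ
    simp only [Finset.mem_insert, Finset.mem_singleton, not_or] at hσ
    obtain ⟨hσ1, hσ2⟩ := hσ
    have hex : ∃ i, i ≠ p ∧ i ≠ q ∧ σ i ≠ i := by
      by_contra hc
      push_neg at hc
      have hfix : ∀ i, i ≠ p → i ≠ q → σ i = i := hc
      have hsp : σ p = p ∨ σ p = q := by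
        by_contra h2
        push_neg at h2
        exact h2.1 (σ.injective (hfix (σ p) h2.1 h2.2))
      have hsq : σ q = p ∨ σ q = q := by
        by_contra h2
        push_neg at h2
        exact h2.2 (σ.injective (hfix (σ q) h2.1 h2.2))
      rcases hsp with hp | hp
      · have hq : σ q = q := by
          rcases hsq with h1 | h1
          · exact absurd (σ.injective (h1.trans hp.symm)) (Ne.symm h)
          · exact h1
        refine hσ1 (Equiv.ext fun i => ?_)
        simp only [Equiv.Perm.one_apply]
        by_cases hip : i = p
        · subst hip; exact hp
        by_cases hiq : i = q
        · subst hiq; exact hq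
        · exact hfix i hip hiq
      · have hq : σ q = p := by
          rcases hsq with h1 | h1
          · exact h1
          · exact absurd (σ.injective (hp.trans h1.symm)) h
        refine hσ2 (Equiv.ext fun i => ?_)
        by_cases hip : i = p
        · subst hip; rw [hp, Equiv.swap_apply_left]
        by_cases hiq : i = q
        · subst hiq; rw [hq, Equiv.swap_apply_right]
        · rw [hfix i hip hiq, Equiv.swap_apply_of_ne_of_ne hip hiq]
    obtain ⟨i, hip, hiq, hne⟩ := hex
    have hz : M' (σ i) i = 0 := by
      rw [hap, if_neg hiq, if_neg hip]
      exact Matrix.one_apply_ne hne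
    exact mul_eq_zero_of_right _ (Finset.prod_eq_zero (Finset.mem_univ i) hz)


variable {R : Type*} [CommRing R]

lemma mul_updateColumn {n : Type*} [Fintype n] [DecidableEq n]
    (M N : Matrix n n R) (j : n) (v : n → R) :
    M * (N.updateCol j v) = (M * N).updateCol j (M.mulVec v) := by
  ext i j'
  by_cases h : j' = j <;>
    simp [Matrix.mul_apply, Matrix.updateCol_apply, h, Matrix.mulVec, dotProduct]

lemma det_two_ecols {k : ℕ} (M : Matrix (Fin (k+2)) (Fin (k+2)) R) (a b : R) :
    det (updateCol (updateCol M ((Fin.last k).castSucc)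
        (fun i => a * (1 : Matrix (Fin (k+2)) (Fin (k+2)) R) i ((Fin.last k).castSucc)))
        (Fin.last (k+1)) (fun i => b * (1 : Matrix (Fin (k+2)) (Fin (k+2)) R) i (Fin.last (k+1))))
      = a * b * det (M.submatrix (Fin.castSucc ∘ Fin.castSucc) (Fin.castSucc ∘ Fin.castSucc)) := by
  set p : Fin (k+2) := (Fin.last k).castSucc with hp
  set q : Fin (k+2) := Fin.last (k+1) with hq
  set A := updateCol (updateCol M p
      (fun i => a * (1 : Matrix (Fin (k+2)) (Fin (k+2)) R) i p)) q
      (fun i => b * (1 : Matrix (Fin (k+2)) (Fin (k+2)) R) i q) with hA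
  have hAentry : ∀ i j, A i j = if j = q then b * (1 : Matrix (Fin (k+2)) (Fin (k+2)) R) i q
      else if j = p then a * (1 : Matrix (Fin (k+2)) (Fin (k+2)) R) i p else M i j := by
    intro i j
    rw [hA]
    simp [Matrix.updateCol_apply]
  set B := A.submatrix (Fin.castSucc : Fin (k+1) → Fin (k+2)) Fin.castSucc with hB
  have expand1 : det A = b * det B := by
    rw [det_succ_column A q, Finset.sum_eq_single q]
    · have h1 : A q q = b := by
        rw [hAentry, if_pos rfl, Matrix.one_apply_eq, mul_one]
      have h2 : ((-1 : R)) ^ ((q:ℕ) + (q:ℕ)) = 1 := Even.neg_one_pow ⟨(q:ℕ), by ring⟩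
      rw [h1, h2, one_mul, hB]
      congr 1
      rw [hq, Fin.succAbove_last]
    · intro i _ hi
      have : A i q = 0 := by
        rw [hAentry, if_pos rfl, Matrix.one_apply_ne hi, mul_zero]
      rw [this, mul_zero, zero_mul]
    · simp
  have hBentry : ∀ i j, B i j = if j = Fin.last k
      then a * (1 : Matrix (Fin (k+1)) (Fin (k+1)) R) i (Fin.last k)
      else M i.castSucc j.castSucc := by
    intro i j
    have hjq : (j.castSucc : Fin (k+2)) ≠ q := by
      simp [hq, Fin.ext_iff]
      omega
    rw [hB, Matrix.submatrix_apply, hAentry, if_neg hjq]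
    by_cases hj : j = Fin.last k
    · subst hj
      rw [if_pos rfl, if_pos rfl]
      congr 1
      simp only [Matrix.one_apply, hp, Fin.castSucc_inj]
    · rw [if_neg hj, if_neg]
      intro hc
      exact hj (by simpa [Fin.ext_iff, hp] using hc)
  have expand2 : det B = a * det (M.submatrix (Fin.castSucc ∘ Fin.castSucc) (Fin.castSucc ∘ Fin.castSucc)) := by
    rw [det_succ_column B (Fin.last k), Finset.sum_eq_single (Fin.last k)]
    · have h1 : B (Fin.last k) (Fin.last k) = a := by
        rw [hBentry, if_pos rfl, Matrix.one_apply_eq, mul_one]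
      have h2 : ((-1 : R)) ^ ((Fin.last k : ℕ) + (Fin.last k : ℕ)) = 1 :=
        Even.neg_one_pow ⟨k, by simp⟩
      rw [h1, h2, one_mul, Fin.succAbove_last]
      congr 1
      congr 1
      ext i j
      rw [Matrix.submatrix_apply, hBentry, if_neg]
      · rfl
      · intro hc
        have := congrArg Fin.val hc
        simp [Fin.ext_iff] at this
        omega
    · intro i _ hi
      have : B i (Fin.last k) = 0 := by
        rw [hBentry, if_pos rfl, Matrix.one_apply_ne hi, mul_zero]
      rw [this, mul_zero, zero_mul]
    · simp
  rw [expand1, expand2]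
  ring


variable {R : Type*} [CommRing R]

lemma jacobi_aux {k : ℕ} (M : Matrix (Fin (k+2)) (Fin (k+2)) R) :
    M.det * (M.adjugate ((Fin.last k).castSucc) ((Fin.last k).castSucc)
        * M.adjugate (Fin.last (k+1)) (Fin.last (k+1))
      - M.adjugate (Fin.last (k+1)) ((Fin.last k).castSucc)
        * M.adjugate ((Fin.last k).castSucc) (Fin.last (k+1)))
    = M.det * (M.det *
        det (M.submatrix (Fin.castSucc ∘ Fin.castSucc) (Fin.castSucc ∘ Fin.castSucc))) := by
  set p : Fin (k+2) := (Fin.last k).castSucc with hp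
  set q : Fin (k+2) := Fin.last (k+1) with hq
  have hpq : p ≠ q := by
    simp [hp, hq, Fin.ext_iff]
  set C := updateCol (updateCol (1 : Matrix (Fin (k+2)) (Fin (k+2)) R) p
      (fun i => M.adjugate i p)) q (fun i => M.adjugate i q) with hC
  have hdetC : det C = M.adjugate p p * M.adjugate q q - M.adjugate q p * M.adjugate p q :=
    det_updateColumn_updateColumn_one hpq _ _
  have hMC : M * C = updateCol (updateCol M p
      (fun i => M.det * (1 : Matrix (Fin (k+2)) (Fin (k+2)) R) i p)) q
      (fun i => M.det * (1 : Matrix (Fin (k+2)) (Fin (k+2)) R) i q) := by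
    rw [hC, mul_updateColumn, mul_updateColumn, Matrix.mul_one]
    have hv : ∀ j : Fin (k+2), M.mulVec (fun i => M.adjugate i j)
        = fun i => M.det * (1 : Matrix (Fin (k+2)) (Fin (k+2)) R) i j := by
      intro j
      funext i
      have : M.mulVec (fun i => M.adjugate i j) i = (M * M.adjugate) i j := by
        simp [Matrix.mulVec, Matrix.mul_apply, dotProduct]
      rw [this, Matrix.mul_adjugate]
      simp [Matrix.smul_apply]
    rw [hv p, hv q]
  have hdetMC : det (M * C) = M.det * (M.det *
      det (M.submatrix (Fin.castSucc ∘ Fin.castSucc) (Fin.castSucc ∘ Fin.castSucc))) := by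
    rw [hMC, det_two_ecols]
    ring
  calc M.det * (M.adjugate p p * M.adjugate q q - M.adjugate q p * M.adjugate p q)
      = M.det * det C := by rw [hdetC]
    _ = det (M * C) := by rw [det_mul]
    _ = _ := hdetMC

lemma jacobi_last_two {k : ℕ} (M : Matrix (Fin (k+2)) (Fin (k+2)) R) :
    M.det * det (M.submatrix (Fin.castSucc ∘ Fin.castSucc) (Fin.castSucc ∘ Fin.castSucc))
      = M.adjugate ((Fin.last k).castSucc) ((Fin.last k).castSucc)
          * M.adjugate (Fin.last (k+1)) (Fin.last (k+1))
        - M.adjugate (Fin.last (k+1)) ((Fin.last k).castSucc)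
          * M.adjugate ((Fin.last k).castSucc) (Fin.last (k+1)) := by
  let A' := mvPolynomialX (Fin (k+2)) (Fin (k+2)) ℤ
  have key : A'.det * det (A'.submatrix (Fin.castSucc ∘ Fin.castSucc) (Fin.castSucc ∘ Fin.castSucc))
      = A'.adjugate ((Fin.last k).castSucc) ((Fin.last k).castSucc)
          * A'.adjugate (Fin.last (k+1)) (Fin.last (k+1))
        - A'.adjugate (Fin.last (k+1)) ((Fin.last k).castSucc)
          * A'.adjugate ((Fin.last k).castSucc) (Fin.last (k+1)) := by
    apply mul_left_cancel₀ (det_mvPolynomialX_ne_zero (Fin (k+2)) ℤ)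
    exact (jacobi_aux A').symm.trans (by ring)
  let φ := MvPolynomial.aeval (R := ℤ) (fun p : Fin (k+2) × Fin (k+2) => M p.1 p.2)
  have hM : φ.mapMatrix A' = M := mvPolynomialX_mapMatrix_aeval ℤ M
  have hsub : (φ.mapMatrix A').submatrix (Fin.castSucc ∘ Fin.castSucc) (Fin.castSucc ∘ Fin.castSucc)
      = φ.mapMatrix (A'.submatrix (Fin.castSucc ∘ Fin.castSucc) (Fin.castSucc ∘ Fin.castSucc)) := rfl
  calc M.det * det (M.submatrix (Fin.castSucc ∘ Fin.castSucc) (Fin.castSucc ∘ Fin.castSucc))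
      = φ (A'.det * det (A'.submatrix (Fin.castSucc ∘ Fin.castSucc) (Fin.castSucc ∘ Fin.castSucc))) := by
        rw [← hM, hsub, _root_.map_mul φ, AlgHom.map_det, AlgHom.map_det]
    _ = _ := by
        rw [key]
        simp only [_root_.map_mul, map_sub]
        rw [← hM, ← AlgHom.map_adjugate]
        rfl

end Aux


noncomputable def Gg (m : ℕ) : ℝ → ℝ := iteratedDeriv m gFun

def sh (k : ℕ) : Fin (k+1) → ℕ := fun j => if j = Fin.last k then k+1 else j

noncomputable def E1 (k : ℕ) (t : ℝ) : ℝ :=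
  det (Matrix.of fun i j : Fin (k+1) => Gg (sh k i + (j:ℕ)) t)
noncomputable def E2 (k : ℕ) (t : ℝ) : ℝ :=
  det (Matrix.of fun i j : Fin (k+1) => Gg (sh k i + sh k j) t)

lemma deriv_detG (k : ℕ) (ρ : Fin (k+1) → ℕ) (t : ℝ) :
    HasDerivAt (fun s => det (Matrix.of fun i j : Fin (k+1) => Gg (ρ i + (j:ℕ)) s))
      (det (Matrix.of fun i j : Fin (k+1) => Gg (ρ i + sh k j) t)) t := by
  have h := hasDerivAt_det (fun i j => Gg (ρ i + (j:ℕ)))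
    (fun i j => Gg (ρ i + (j:ℕ) + 1)) t (fun i j => hG _ t)
  have hsum : (∑ c : Fin (k+1), ((Matrix.of fun i j : Fin (k+1) => Gg (ρ i + (j:ℕ)) t).updateCol c
      (fun r => Gg (ρ r + (c:ℕ) + 1) t)).det)
      = det (Matrix.of fun i j : Fin (k+1) => Gg (ρ i + sh k j) t) := by
    rw [Finset.sum_eq_single (Fin.last k)]
    · congr 1
      ext i j
      rw [Matrix.updateCol_apply]
      by_cases hj : j = Fin.last k
      · subst hj
        rw [if_pos rfl]
        show Gg (ρ i + (k:ℕ) + 1) t = Gg (ρ i + sh k (Fin.last k)) t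
        congr 1
        simp [sh]
        omega
      · rw [if_neg hj]
        show Gg (ρ i + (j:ℕ)) t = Gg (ρ i + sh k j) t
        congr 1
        simp [sh, hj]
    · intro c _ hc
      have hlt : (c:ℕ) < k := by
        have h1 := c.isLt
        have h2 : (c:ℕ) ≠ k := fun h => hc (Fin.ext (by simp [h]))
        omega
      set c' : Fin (k+1) := ⟨(c:ℕ)+1, by omega⟩ with hc'
      apply Matrix.det_zero_of_column_eq (show c ≠ c' by
        intro h
        have := congrArg Fin.val h
        simp [hc'] at this)
      intro r
      rw [Matrix.updateCol_apply, Matrix.updateCol_apply, if_pos rfl, if_neg (by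
        intro h
        have := congrArg Fin.val h
        simp [hc'] at this)]
      show Gg (ρ r + (c:ℕ) + 1) t = Gg (ρ r + (c':ℕ)) t
      rfl
    · simp
  rw [hsum] at h
  exact h

lemma detG_transpose (k : ℕ) (t : ℝ) :
    det (Matrix.of fun i j : Fin (k+1) => Gg ((i:ℕ) + sh k j) t) = E1 k t := by
  rw [E1, ← Matrix.det_transpose]
  congr 1
  ext i j
  simp only [Matrix.transpose_apply, Matrix.of_apply]
  rw [Nat.add_comm]

lemma hE1 (k : ℕ) : deriv (Dk (k+1)) = E1 k := by
  funext t
  have h := deriv_detG k (fun i => (i : ℕ)) t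
  have hD : Dk (k+1) = fun s => det (Matrix.of fun i j : Fin (k+1) => Gg ((i:ℕ) + (j:ℕ)) s) := rfl
  rw [hD, h.deriv, detG_transpose]

lemma hE2 (k : ℕ) (t : ℝ) : deriv (E1 k) t = E2 k t := by
  have h := deriv_detG k (sh k) t
  have hD : E1 k = fun s => det (Matrix.of fun i j : Fin (k+1) => Gg (sh k i + (j:ℕ)) s) := rfl
  rw [hD, h.deriv]
  rfl

lemma succAbove_p_coe {k : ℕ} (j : Fin (k+1)) :
    ((((Fin.last k).castSucc : Fin (k+2)).succAbove j : Fin (k+2)) : ℕ) = sh k j := by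
  by_cases hj : j = Fin.last k
  · subst hj
    rw [Fin.succAbove_castSucc_self]
    simp [sh]
  · have hlt : j < Fin.last k := lt_of_le_of_ne (Fin.le_last j) hj
    rw [Fin.succAbove_castSucc_of_lt _ _ hlt]
    simp [sh, hj]

/-- The Toda-type identity `D_{k-1} D_{k+1} = D_k D_k'' - (D_k')²` for `k ≥ 1`. -/
theorem toda_identity (k : ℕ) (t : ℝ) :
    Dk k t * Dk (k + 2) t =
      Dk (k + 1) t * deriv (deriv (Dk (k + 1))) t - (deriv (Dk (k + 1)) t) ^ 2 := by
  rw [hE1, hE2]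
  set Mbig : Matrix (Fin (k+2)) (Fin (k+2)) ℝ :=
    Matrix.of fun i j : Fin (k+2) => Gg ((i:ℕ) + (j:ℕ)) t with hMbig
  set p : Fin (k+2) := (Fin.last k).castSucc with hp
  set q : Fin (k+2) := Fin.last (k+1) with hq
  have jac := jacobi_last_two Mbig
  have hdet : Mbig.det = Dk (k+2) t := rfl
  have hinner : det (Mbig.submatrix (Fin.castSucc ∘ Fin.castSucc) (Fin.castSucc ∘ Fin.castSucc))
      = Dk k t := by
    rfl
  have ha_qq : Mbig.adjugate q q = Dk (k+1) t := by
    rw [Matrix.adjugate_fin_succ_eq_det_submatrix]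
    rw [show ((-1:ℝ))^((q:ℕ)+(q:ℕ)) = 1 from Even.neg_one_pow ⟨(q:ℕ), by ring⟩, one_mul]
    unfold Dk
    congr 1
    ext i j
    show Mbig (q.succAbove i) (q.succAbove j) = _
    rw [hq, Fin.succAbove_last]
    show Gg (((Fin.castSucc i : Fin (k+2)):ℕ) + ((Fin.castSucc j : Fin (k+2)):ℕ)) t = _
    rfl
  have ha_pp : Mbig.adjugate p p = E2 k t := by
    rw [Matrix.adjugate_fin_succ_eq_det_submatrix]
    rw [show ((-1:ℝ))^((p:ℕ)+(p:ℕ)) = 1 from Even.neg_one_pow ⟨(p:ℕ), by ring⟩, one_mul]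
    unfold E2
    congr 1
    ext i j
    show Gg (((p.succAbove i : Fin (k+2)):ℕ) + ((p.succAbove j : Fin (k+2)):ℕ)) t = _
    rw [hp, succAbove_p_coe, succAbove_p_coe]
    rfl
  have hodd : ((-1:ℝ))^((p:ℕ)+(q:ℕ)) = -1 := Odd.neg_one_pow ⟨k, by
    simp [hp, hq]
    ring⟩
  have ha_qp : Mbig.adjugate q p = -(E1 k t) := by
    rw [Matrix.adjugate_fin_succ_eq_det_submatrix, hodd]
    rw [neg_one_mul, neg_inj]
    unfold E1
    congr 1
    ext i j
    show Gg (((p.succAbove i : Fin (k+2)):ℕ) + ((q.succAbove j : Fin (k+2)):ℕ)) t = _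
    rw [hp, succAbove_p_coe, hq, Fin.succAbove_last]
    simp [Gg]
  have ha_pq : Mbig.adjugate p q = -(E1 k t) := by
    rw [Matrix.adjugate_fin_succ_eq_det_submatrix]
    rw [show ((-1:ℝ))^((q:ℕ)+(p:ℕ)) = -1 from by rw [add_comm]; exact hodd]
    rw [neg_one_mul, neg_inj, ← detG_transpose]
    congr 1
    ext i j
    show Gg (((q.succAbove i : Fin (k+2)):ℕ) + ((p.succAbove j : Fin (k+2)):ℕ)) t = _
    rw [hq, Fin.succAbove_last, hp, succAbove_p_coe]
    simp [Gg]
  rw [hdet, hinner, ha_qq, ha_pp, ha_qp, ha_pq] at jac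
  linear_combination jac
end
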